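/- Let R' be a root system whose Weyl group contains −1, with positive roots R'⁺, and define the cascade E inductively: E₁ is the set of maximal elements of R'⁺ (for the order α ≤ α' iff α' − α is a nonnegative combination of positive roots), and Eᵢ is the set of maximal elements of {α ∈ R'⁺ : ⟨α'^∨, α⟩ = 0 for all α' ∈ E₁ ∪ … ∪ E_{i−1}}; let E = ∪ᵢ Eᵢ. Then for any two distinct α, α' ∈ E one has ⟨α'^∨, α⟩ = 0. -/

import Mathlib

open scoped RealInnerProductSpace

variable {V : Type*} [NormedAddCommGroup V] [InnerProductSpace ℝ V] [FiniteDimensional ℝ V]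

/-- The reflection in the hyperplane orthogonal to `α`. -/
noncomputable def wrefl (α : V) : V ≃ₗᵢ[ℝ] V := Submodule.reflection (ℝ ∙ α)ᗮ

/-- A (reduced) root system in a real inner product space. -/
structure IsRootSystem (R : Finset V) : Prop where
  ne_zero : (0 : V) ∉ R
  span_eq_top : Submodule.span ℝ (R : Set V) = ⊤
  reduced : ∀ α ∈ R, ∀ c : ℝ, c • α ∈ R → c = 1 ∨ c = -1
  refl_mem : ∀ α ∈ R, ∀ β ∈ R, wrefl α β ∈ R
  pairing_int : ∀ α ∈ R, ∀ β ∈ R, ∃ n : ℤ, 2 * ⟪α, β⟫ / ⟪α, α⟫ = (n : ℝ)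

/-- The Weyl group of a root system, as a group of linear isometries. -/
noncomputable def weylGroup (R : Finset V) : Subgroup (V ≃ₗᵢ[ℝ] V) :=
  Subgroup.closure (wrefl '' (R : Set V))

/-- A system of positive roots. -/
structure IsPositiveSystem (R Rpos : Finset V) : Prop where
  subset : Rpos ⊆ R
  mem_or_neg_mem : ∀ α ∈ R, α ∈ Rpos ∨ -α ∈ Rpos
  not_mem_and_neg_mem : ∀ α ∈ Rpos, -α ∉ Rpos
  add_mem : ∀ α ∈ Rpos, ∀ β ∈ Rpos, α + β ∈ R → α + β ∈ Rpos

/-- A simple (indecomposable) positive root. -/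
def IsSimpleRoot (Rpos : Finset V) (α : V) : Prop :=
  α ∈ Rpos ∧ ¬∃ β ∈ Rpos, ∃ γ ∈ Rpos, α = β + γ

/-- The length of `w`, i.e. the number of positive roots sent by `w` to negative roots. -/
noncomputable def len (Rpos : Finset V) (w : V ≃ₗᵢ[ℝ] V) : ℕ := by
  classical exact (Rpos.filter fun α => w α ∉ Rpos).card

/-- The coroot attached to a root. -/
noncomputable def cv (α : V) : V := (2 / ⟪α, α⟫) • α

/-- The dominance order: `α ≤ α'` iff `α' - α` is a nonnegative combination of
positive roots. -/
def rle (Rpos : Finset V) (α α' : V) : Prop :=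
  ∃ c : V → ℝ, (∀ β, 0 ≤ c β) ∧ α' - α = ∑ β ∈ Rpos, c β • β

/-- `α` is maximal in `S` for the dominance order. -/
def IsMaxIn (Rpos : Finset V) (S : Set V) (α : V) : Prop :=
  α ∈ S ∧ ∀ α' ∈ S, rle Rpos α α' → rle Rpos α' α

/-- The `n`-th layer of Kostant's cascade: the maximal positive roots among those
orthogonal to all roots of the previous layers. -/
def cascadeLevel (Rpos : Finset V) : ℕ → Set V
  | n =>
    {α | IsMaxIn Rpos
      {β | β ∈ Rpos ∧ ∀ m, m < n → ∀ γ ∈ cascadeLevel Rpos m, ⟪γ, β⟫ = 0} α}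
  termination_by n => n

/-- Kostant's cascade of orthogonal roots. -/
def cascade (Rpos : Finset V) : Set V := ⋃ n, cascadeLevel Rpos n

/-- The set of positive roots on which an involution `w` acts by `-1`. -/
noncomputable def posNegSet (Rpos : Finset V) (w : V ≃ₗᵢ[ℝ] V) : Finset V := by
  classical exact Rpos.filter fun α => w α = -α

/-- The element `r_w`: the sum of the coroots of the cascade of the root system
`R_w = {α ∈ R : w α = -α}`. -/
noncomputable def rInv (Rpos : Finset V) (w : V ≃ₗᵢ[ℝ] V) : V :=
  ∑ α ∈ posNegSet Rpos w, Set.indicator (cascade (posNegSet Rpos w)) cv α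

lemma wrefl_apply' (α β : V) : wrefl α β = β - (2 * (⟪α, β⟫ / ⟪α, α⟫)) • α := by
  rw [wrefl, Submodule.reflection_orthogonal_apply, Submodule.reflection_singleton_apply]
  rw [real_inner_self_eq_norm_sq]
  rw [two_smul, two_mul, add_smul]
  simp only [RCLike.ofReal_real_eq_id, id_eq]
  abel

section RS
variable {R Rpos : Finset V} (hR : IsRootSystem R)
include hR

lemma root_ne_zero {α : V} (hα : α ∈ R) : α ≠ 0 := fun h => hR.ne_zero (h ▸ hα)

lemma root_inner_self_pos {α : V} (hα : α ∈ R) : 0 < ⟪α, α⟫ :=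
  lt_of_le_of_ne real_inner_self_nonneg
    (Ne.symm (inner_self_ne_zero.2 (root_ne_zero hR hα)))

lemma neg_root_mem {α : V} (hα : α ∈ R) : -α ∈ R := by
  have h := hR.refl_mem α hα α hα
  rwa [wrefl_apply', div_self (ne_of_gt (root_inner_self_pos hR hα)), mul_one, two_smul,
    sub_add_eq_sub_sub, sub_sub_cancel_left] at h

/-- Root string lemma: if two non-opposite roots have negative inner product,
their sum is a root. -/
lemma root_add_mem {α β : V} (hα : α ∈ R) (hβ : β ∈ R) (hne : β ≠ -α)
    (hin : ⟪α, β⟫ < 0) : α + β ∈ R := by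
  have ha := root_inner_self_pos hR hα
  have hb := root_inner_self_pos hR hβ
  obtain ⟨n, hn⟩ := hR.pairing_int α hα β hβ
  obtain ⟨m, hm⟩ := hR.pairing_int β hβ α hα
  have hin' : ⟪β, α⟫ < 0 := by rw [real_inner_comm]; exact hin
  -- strict Cauchy–Schwarz
  have hcs : ⟪α, β⟫ * ⟪α, β⟫ < ⟪α, α⟫ * ⟪β, β⟫ := by
    have hprop : ‖-β‖ • α ≠ ‖α‖ • -β := by
      intro h
      have hβα : β = (-(‖β‖ / ‖α‖)) • α := by
        have hα0 : ‖α‖ ≠ 0 := norm_ne_zero_iff.2 (root_ne_zero hR hα)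
        rw [norm_neg] at h
        have h2 : (‖α‖)⁻¹ • (‖β‖ • α) = (‖α‖)⁻¹ • (‖α‖ • -β) := by rw [h]
        rw [smul_smul, smul_smul, inv_mul_cancel₀ hα0, one_smul] at h2
        have h3 : β = -((‖α‖⁻¹ * ‖β‖) • α) := by rw [h2, neg_neg]
        rw [div_eq_inv_mul, neg_smul]
        exact h3
      have := hR.reduced α hα _ (hβα ▸ hβ)
      rcases this with h1 | h1
      · rw [h1, one_smul] at hβα
        rw [hβα] at hin
        exact absurd hin (not_lt.2 (le_of_lt ha))
      · rw [h1, neg_one_smul] at hβα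
        exact hne hβα
    have h2 := inner_lt_norm_mul_iff_real.2 hprop
    rw [inner_neg_right, norm_neg] at h2
    have h3 : -⟪α, β⟫ < ‖α‖ * ‖β‖ := by linarith
    have h4 : (0:ℝ) ≤ -⟪α, β⟫ := by linarith
    nlinarith [real_inner_self_eq_norm_mul_norm α, real_inner_self_eq_norm_mul_norm β,
      norm_nonneg α, norm_nonneg β]
  have hnneg : (n : ℝ) < 0 := by
    rw [← hn]; exact div_neg_of_neg_of_pos (by linarith) ha
  have hmneg : (m : ℝ) < 0 := by
    rw [← hm]; exact div_neg_of_neg_of_pos (by linarith) hb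
  have hprod : (n : ℝ) * (m : ℝ) < 4 := by
    rw [← hn, ← hm, real_inner_comm α β]
    rw [div_mul_div_comm]
    rw [div_lt_iff₀ (by positivity)]
    nlinarith
  have hn0 : n < 0 := by exact_mod_cast hnneg
  have hm0 : m < 0 := by exact_mod_cast hmneg
  have hn1 : n ≤ -1 := by omega
  have hm1 : m ≤ -1 := by omega
  have hprodZ : n * m < 4 := by exact_mod_cast hprod
  have hkey : n = -1 ∨ m = -1 := by
    by_contra hcon
    push_neg at hcon
    have h1 : n ≤ -2 := by omega
    have h2 : m ≤ -2 := by omega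
    nlinarith
  rcases hkey with hk | hk
  · -- 2⟪α,β⟫/⟪α,α⟫ = -1, so wrefl α β = β + α
    have := hR.refl_mem α hα β hβ
    rw [wrefl_apply'] at this
    rw [mul_div_assoc] at hn
    rw [hn, hk] at this
    push_cast at this
    rw [neg_smul, one_smul, sub_neg_eq_add] at this
    rwa [add_comm]
  · have := hR.refl_mem β hβ α hα
    rw [wrefl_apply'] at this
    rw [mul_div_assoc] at hm
    rw [hm, hk] at this
    push_cast at this
    rw [neg_smul, one_smul, sub_neg_eq_add] at this
    exact this


omit hR in
lemma inner_multiset_sum_nonneg (β : V) (M : Multiset V) (h : ∀ x ∈ M, 0 ≤ ⟪β, x⟫) :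
    0 ≤ ⟪β, M.sum⟫ := by
  induction M using Multiset.induction with
  | empty => simp
  | cons a M ih =>
    rw [Multiset.sum_cons, inner_add_right]
    have h1 := h a (Multiset.mem_cons_self a M)
    have h2 := ih fun x hx => h x (Multiset.mem_cons_of_mem hx)
    linarith

variable (hP : IsPositiveSystem R Rpos)
include hP

lemma pos_root_mem {α : V} (hα : α ∈ Rpos) : α ∈ R := hP.subset hα

lemma multiset_sum_ne_zero_aux :
    ∀ n (M : Multiset V), Multiset.card M = n → (∀ x ∈ M, x ∈ Rpos) → M ≠ 0 → M.sum ≠ 0 := by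
  classical
  intro n
  induction n using Nat.strong_induction_on with
  | _ n ih =>
    intro M hcard hmem hne hsum
    obtain ⟨β, hβ⟩ := Multiset.exists_mem_of_ne_zero hne
    obtain ⟨M', rfl⟩ := Multiset.exists_cons_of_mem hβ
    have hβR : β ∈ Rpos := hmem β (Multiset.mem_cons_self _ _)
    rw [Multiset.sum_cons] at hsum
    have hb : 0 < ⟪β, β⟫ := root_inner_self_pos hR (hP.subset hβR)
    have hMsum : ⟪β, M'.sum⟫ < 0 := by
      have h0 : ⟪β, β + M'.sum⟫ = 0 := by rw [hsum, inner_zero_right]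
      rw [inner_add_right] at h0; linarith
    have hex : ∃ x ∈ M', ⟪β, x⟫ < 0 := by
      by_contra hcon; push_neg at hcon
      exact absurd (inner_multiset_sum_nonneg β M' hcon) (not_le.2 hMsum)
    obtain ⟨x, hxM, hx⟩ := hex
    have hxR : x ∈ Rpos := hmem x (Multiset.mem_cons_of_mem hxM)
    have hxne : x ≠ -β := fun h => hP.not_mem_and_neg_mem β hβR (h ▸ hxR)
    have hγR : β + x ∈ Rpos := hP.add_mem β hβR x hxR
      (root_add_mem hR (hP.subset hβR) (hP.subset hxR) hxne hx)
    have hx' : x ::ₘ M'.erase x = M' := Multiset.cons_erase hxM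
    have hM'card : Multiset.card M' + 1 = n := by
      rw [← hcard, Multiset.card_cons]
    have hM'ne : Multiset.card M' ≠ 0 := by
      intro h0
      rw [Multiset.card_eq_zero] at h0
      rw [h0] at hxM
      exact absurd hxM (Multiset.notMem_zero x)
    set M'' : Multiset V := (β + x) ::ₘ M'.erase x with hM''
    have hcard'' : Multiset.card M'' = n - 1 := by
      rw [hM'', Multiset.card_cons, Multiset.card_erase_of_mem hxM, Nat.pred_eq_sub_one]
      omega
    have hmem'' : ∀ y ∈ M'', y ∈ Rpos := by
      intro y hy
      rcases Multiset.mem_cons.1 hy with rfl | hy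
      · exact hγR
      · exact hmem y (Multiset.mem_cons_of_mem (Multiset.mem_of_mem_erase hy))
    have hsum'' : M''.sum = 0 := by
      have h1 : M'.sum = x + (M'.erase x).sum := by rw [← Multiset.sum_cons, hx']
      rw [hM'', Multiset.sum_cons]
      rw [h1] at hsum
      rw [← hsum]; abel
    exact ih (n - 1) (by omega) M'' hcard'' hmem'' (Multiset.cons_ne_zero) hsum''

lemma multiset_sum_ne_zero (M : Multiset V) (hmem : ∀ x ∈ M, x ∈ Rpos) (hne : M ≠ 0) :
    M.sum ≠ 0 :=
  multiset_sum_ne_zero_aux hR hP (Multiset.card M) M rfl hmem hne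

/-- No nontrivial nonnegative combination of positive roots vanishes. -/
lemma no_pos_dependency :
    ¬ ∃ T : Finset V, T ⊆ Rpos ∧ T.Nonempty ∧
      ∃ c : V → ℝ, (∀ x ∈ T, 0 < c x) ∧ ∑ x ∈ T, c x • x = 0 := by
  classical
  rintro ⟨T0, hT0sub, hT0ne, hT0c⟩
  set P : Finset V → Prop := fun T => T ⊆ Rpos ∧ T.Nonempty ∧
      ∃ c : V → ℝ, (∀ x ∈ T, 0 < c x) ∧ ∑ x ∈ T, c x • x = 0 with hPdef
  set s : Finset (Finset V) := Rpos.powerset.filter P with hs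
  have hT0s : T0 ∈ s := by
    rw [hs, Finset.mem_filter, Finset.mem_powerset]
    exact ⟨hT0sub, hT0sub, hT0ne, hT0c⟩
  obtain ⟨Tm, hTms, hTmmin⟩ := Finset.exists_min_image s Finset.card ⟨T0, hT0s⟩
  set n := Tm.card with hn
  have hmin : ∀ T : Finset V, P T → n ≤ T.card := by
    intro T hT
    exact hTmmin T (by rw [hs, Finset.mem_filter, Finset.mem_powerset]; exact ⟨hT.1, hT⟩)
  have step : ∀ T : Finset V, P T → T.card = n →
      ∃ T' e, P T' ∧ T'.card = n ∧ e ∈ Rpos ∧ ∑ x ∈ T', x = (∑ x ∈ T, x) + e := by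
    intro T hT hTcard
    obtain ⟨hTsub, hTne, c0, hc0pos, hc0sum⟩ := hT
    set c : V → ℝ := fun x => if x ∈ T then c0 x else 0 with hc
    have hcpos : ∀ x ∈ T, 0 < c x := by
      intro x hx; rw [hc]; simpa [hx] using hc0pos x hx
    have hczero : ∀ x, x ∉ T → c x = 0 := by intro x hx; rw [hc]; simp [hx]
    have hcsum : ∑ x ∈ T, c x • x = 0 := by
      rw [← hc0sum]; apply Finset.sum_congr rfl; intro x hx; rw [hc]; simp [hx]
    obtain ⟨δ, hδ⟩ := hTne
    have hex : ∃ β ∈ T, ⟪β, δ⟫ < 0 := by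
      by_contra hcon; push_neg at hcon
      have h0 : ∑ x ∈ T, c x * ⟪x, δ⟫ = 0 := by
        have h1 := congrArg (fun v => (⟪v, δ⟫ : ℝ)) hcsum
        simpa [sum_inner, real_inner_smul_left] using h1
      have hpos : 0 < ∑ x ∈ T, c x * ⟪x, δ⟫ := by
        apply Finset.sum_pos'
        · intro i hi; exact mul_nonneg (le_of_lt (hcpos i hi)) (hcon i hi)
        · exact ⟨δ, hδ, mul_pos (hcpos δ hδ)
            (root_inner_self_pos hR (hP.subset (hTsub hδ)))⟩
      linarith
    obtain ⟨β, hβT, hβδ⟩ := hex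
    have hβδne : β ≠ δ := by
      rintro rfl
      exact absurd hβδ (not_lt.2 (le_of_lt (root_inner_self_pos hR (hP.subset (hTsub hβT)))))
    have key : ∀ u w : V, u ∈ T → w ∈ T → u ≠ w → ⟪u, w⟫ < 0 → c u ≤ c w →
        ∃ T' e, P T' ∧ T'.card = n ∧ e ∈ Rpos ∧ ∑ x ∈ T', x = (∑ x ∈ T, x) + e := by
      intro u w huT hwT huw hin hle
      have huR : u ∈ Rpos := hTsub huT
      have hwR : w ∈ Rpos := hTsub hwT
      have hwnu : w ≠ -u := fun h => hP.not_mem_and_neg_mem u huR (h ▸ hwR)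
      have hγR : u + w ∈ Rpos := hP.add_mem _ huR _ hwR
        (root_add_mem hR (hP.subset huR) (hP.subset hwR) hwnu hin)
      set γ := u + w with hγ
      have hu0 : u ≠ 0 := root_ne_zero hR (hP.subset huR)
      have hw0 : w ≠ 0 := root_ne_zero hR (hP.subset hwR)
      have hγu : γ ≠ u := by
        intro h; exact hw0 (by rwa [hγ, add_eq_left] at h)
      have hγw : γ ≠ w := by
        intro h; exact hu0 (by rwa [hγ, add_eq_right] at h)
      set t := c u with ht
      have ht0 : 0 < t := hcpos u huT
      set c' : V → ℝ := fun x =>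
        c x - (if x = u then t else 0) - (if x = w then t else 0) + (if x = γ then t else 0)
        with hc'
      have huγ : u ≠ γ := Ne.symm hγu
      have hwγ : w ≠ γ := Ne.symm hγw
      have hwu : w ≠ u := Ne.symm huw
      have hc'u : c' u = 0 := by simp [hc', huw, huγ, ht]
      have hc'w : c' w = c w - t := by simp [hc', hwu, hwγ]
      have hc'γ : c' γ = c γ + t := by simp [hc', hγu, hγw]
      have hc'other : ∀ x, x ≠ u → x ≠ w → x ≠ γ → c' x = c x := by
        intro x h1 h2 h3; simp [hc', h1, h2, h3]
      have hcnonneg : ∀ x, 0 ≤ c x := by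
        intro x
        by_cases hxT : x ∈ T
        · exact le_of_lt (hcpos x hxT)
        · exact le_of_eq (hczero x hxT).symm
      have hc'nonneg : ∀ x, 0 ≤ c' x := by
        intro x
        by_cases h1 : x = u
        · rw [h1, hc'u]
        · by_cases h2 : x = w
          · rw [h2, hc'w]
            have := hcpos w hwT
            linarith
          · by_cases h3 : x = γ
            · rw [h3, hc'γ]
              have := hcnonneg γ
              linarith
            · rw [hc'other x h1 h2 h3]
              exact hcnonneg x
      have hTsum : ∀ s : Finset V, ∑ x ∈ s, c' x • x =
          (∑ x ∈ s, c x • x) - (if u ∈ s then t • u else 0) - (if w ∈ s then t • w else 0)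
            + (if γ ∈ s then t • γ else 0) := by
        intro s
        rw [hc']
        simp only [sub_smul, add_smul, ite_smul, zero_smul]
        rw [Finset.sum_add_distrib, Finset.sum_sub_distrib, Finset.sum_sub_distrib,
          Finset.sum_ite_eq' s u (fun x => t • x), Finset.sum_ite_eq' s w (fun x => t • x),
          Finset.sum_ite_eq' s γ (fun x => t • x)]
      by_cases hγT : γ ∈ T
      · exfalso
        have hsum' : ∑ x ∈ T, c' x • x = 0 := by
          rw [hTsum T, hcsum, if_pos huT, if_pos hwT, if_pos hγT, hγ, smul_add]
          abel
        set T' := T.filter (fun x => c' x ≠ 0) with hT'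
        have hsubT : T' ⊆ T := Finset.filter_subset _ _
        have hPT' : P T' := by
          refine ⟨hsubT.trans hTsub, ⟨γ, ?_⟩, c', ?_, ?_⟩
          · rw [hT', Finset.mem_filter]
            refine ⟨hγT, ?_⟩
            rw [hc'γ]
            exact (add_pos (hcpos γ hγT) ht0).ne'
          · intro x hx
            exact lt_of_le_of_ne (hc'nonneg x) (Ne.symm (Finset.mem_filter.1 hx).2)
          · rw [hT', Finset.sum_filter_of_ne, hsum']
            intro x _ hfx h0
            exact hfx (by rw [h0, zero_smul])
        have h1 : n ≤ T'.card := hmin T' hPT'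
        have huT' : u ∉ T' := by
          rw [hT', Finset.mem_filter]
          rintro ⟨-, h⟩
          exact h hc'u
        have hsub2 : T' ⊆ T.erase u := by
          intro x hx
          rw [Finset.mem_erase]
          exact ⟨fun h => huT' (h ▸ hx), hsubT hx⟩
        have h2 : T'.card < n := by
          have hn0 : 0 < n := by
            rw [← hTcard]
            exact Finset.card_pos.2 ⟨u, huT⟩
          calc T'.card ≤ (T.erase u).card := Finset.card_le_card hsub2
            _ = n - 1 := by rw [Finset.card_erase_of_mem huT, hTcard]
            _ < n := by omega
        exact absurd h1 (not_le.2 h2)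
      · have hcγ : c γ = 0 := hczero γ hγT
        have hsum' : ∑ x ∈ insert γ T, c' x • x = 0 := by
          rw [Finset.sum_insert hγT, hTsum T, hcsum, if_pos huT, if_pos hwT, if_neg hγT,
            hc'γ, hcγ, zero_add, hγ, smul_add]
          abel
        set T' := (insert γ T).filter (fun x => c' x ≠ 0) with hT'
        have hsubT : T' ⊆ insert γ T := Finset.filter_subset _ _
        have hsubR : insert γ T ⊆ Rpos := by
          intro x hx
          rcases Finset.mem_insert.1 hx with rfl | hx
          · exact hγR
          · exact hTsub hx
        have hc'γ' : c' γ ≠ 0 := by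
          rw [hc'γ, hcγ, zero_add]
          exact ht0.ne'
        have hPT' : P T' := by
          refine ⟨hsubT.trans hsubR, ⟨γ, ?_⟩, c', ?_, ?_⟩
          · rw [hT', Finset.mem_filter]
            exact ⟨Finset.mem_insert_self _ _, hc'γ'⟩
          · intro x hx
            exact lt_of_le_of_ne (hc'nonneg x) (Ne.symm (Finset.mem_filter.1 hx).2)
          · rw [hT', Finset.sum_filter_of_ne, hsum']
            intro x _ hfx h0
            exact hfx (by rw [h0, zero_smul])
        have huT' : u ∉ T' := by
          rw [hT', Finset.mem_filter]
          rintro ⟨-, h⟩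
          exact h hc'u
        have huIns : u ∈ insert γ T := Finset.mem_insert_of_mem huT
        have hsub2 : T' ⊆ (insert γ T).erase u := by
          intro x hx
          rw [Finset.mem_erase]
          exact ⟨fun h => huT' (h ▸ hx), hsubT hx⟩
        have hcard1 : ((insert γ T).erase u).card = n := by
          rw [Finset.card_erase_of_mem huIns, Finset.card_insert_of_notMem hγT, hTcard]
          omega
        have h1 : n ≤ T'.card := hmin T' hPT'
        have hT'eq : T' = (insert γ T).erase u :=
          Finset.eq_of_subset_of_card_le hsub2 (by rw [hcard1]; exact h1)
        have hsumT' : ∑ x ∈ T', x = (∑ x ∈ T, x) + w := by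
          rw [hT'eq]
          have h3 : ∑ x ∈ (insert γ T).erase u, x = (∑ x ∈ insert γ T, x) - u :=
            eq_sub_of_add_eq (Finset.sum_erase_add _ _ huIns)
          rw [h3, Finset.sum_insert hγT, hγ]
          abel
        exact ⟨T', w, hPT', by rw [hT'eq]; exact hcard1, hwR, hsumT'⟩
    rcases le_total (c β) (c δ) with hle | hle
    · exact key β δ hβT hδ hβδne hβδ hle
    · exact key δ β hδ hβT (Ne.symm hβδne) (by rw [real_inner_comm]; exact hβδ) hle
  have hPTm : P Tm := (Finset.mem_filter.1 hTms).2
  have step' : ∀ p : {T : Finset V // P T ∧ T.card = n},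
      ∃ q : {T : Finset V // P T ∧ T.card = n},
        ∃ e, e ∈ Rpos ∧ ∑ x ∈ q.1, x = (∑ x ∈ p.1, x) + e := by
    rintro ⟨T, hT, hTc⟩
    obtain ⟨T', e, h1, h2, h3, h4⟩ := step T hT hTc
    exact ⟨⟨T', h1, h2⟩, e, h3, h4⟩
  choose next e he hesum using step'
  set seq : ℕ → {T : Finset V // P T ∧ T.card = n} :=
    fun k => Nat.rec ⟨Tm, hPTm, rfl⟩ (fun _ p => next p) k with hseqdef
  have hseq : ∀ k, seq (k + 1) = next (seq k) := fun k => rfl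
  have grow : ∀ i j, i < j → ∃ M : Multiset V, (∀ x ∈ M, x ∈ Rpos) ∧ M ≠ 0 ∧
      ∑ x ∈ (seq j).1, x = (∑ x ∈ (seq i).1, x) + M.sum := by
    intro i j hij
    induction j with
    | zero => omega
    | succ j ihj =>
      have hsj : ∑ x ∈ (seq (j + 1)).1, x = (∑ x ∈ (seq j).1, x) + e (seq j) := by
        rw [hseq j]
        exact hesum (seq j)
      rcases Nat.lt_succ_iff_lt_or_eq.1 hij with h | h
      · obtain ⟨M, hM1, hM2, hM3⟩ := ihj h
        refine ⟨e (seq j) ::ₘ M, ?_, Multiset.cons_ne_zero, ?_⟩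
        · intro x hx
          rcases Multiset.mem_cons.1 hx with rfl | hx
          · exact he (seq j)
          · exact hM1 x hx
        · rw [Multiset.sum_cons, hsj, hM3]
          abel
      · subst h
        refine ⟨{e (seq i)}, ?_, ?_, ?_⟩
        · intro x hx
          rw [Multiset.mem_singleton] at hx
          rw [hx]
          exact he (seq i)
        · simp
        · rw [Multiset.sum_singleton, hsj]
  have hinj : Function.Injective fun k => (seq k).1 := by
    intro i j hij
    simp only at hij
    by_contra hne2
    rcases Ne.lt_or_gt hne2 with h | h
    · obtain ⟨M, hM1, hM2, hM3⟩ := grow i j h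
      rw [hij] at hM3
      exact multiset_sum_ne_zero hR hP M hM1 hM2 (left_eq_add.mp hM3)
    · obtain ⟨M, hM1, hM2, hM3⟩ := grow j i h
      rw [hij] at hM3
      exact multiset_sum_ne_zero hR hP M hM1 hM2 (left_eq_add.mp hM3)
  have hfin : Function.Injective fun k =>
      (⟨(seq k).1, Finset.mem_powerset.2 (seq k).2.1.1⟩ : {x // x ∈ Rpos.powerset}) := by
    intro i j h
    have h2 : (seq i).1 = (seq j).1 := by
      have h3 := congrArg (fun z : {x // x ∈ Rpos.powerset} => z.1) h
      simpa using h3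
    exact hinj h2
  obtain ⟨i, j, hne2, heq⟩ := Finite.exists_ne_map_eq_of_infinite
    (fun k => (⟨(seq k).1, Finset.mem_powerset.2 (seq k).2.1.1⟩ : {x // x ∈ Rpos.powerset}))
  exact hne2 (hfin heq)

end RS

section RS2
variable {R Rpos : Finset V} (hR : IsRootSystem R) (hP : IsPositiveSystem R Rpos)
include hR hP

omit hR hP in
lemma indicator_sum_single {a : V} (ha : a ∈ Rpos) :
    ∑ x ∈ Rpos, (Set.indicator ({a} : Set V) (fun _ => (1 : ℝ)) x) • x = a := by
  classical
  have h : ∀ x ∈ Rpos, (Set.indicator ({a} : Set V) (fun _ => (1 : ℝ)) x) • x =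
      (if x = a then (1 : ℝ) else 0) • x := by
    intro x _
    rw [Set.indicator_apply]
    simp [Set.mem_singleton_iff]
  rw [Finset.sum_congr rfl h]
  simp only [ite_smul, one_smul, zero_smul]
  rw [Finset.sum_ite_eq' Rpos a (fun x => x), if_pos ha]

omit hR hP in
lemma indicator_nonneg' (a : V) : ∀ β : V,
    0 ≤ Set.indicator ({a} : Set V) (fun _ => (1 : ℝ)) β := fun β =>
  Set.indicator_nonneg (fun _ _ => zero_le_one) β

lemma neg_root_not_comb {δ : V} (hδ : δ ∈ Rpos) (c : V → ℝ) (hc : ∀ β, 0 ≤ c β) :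
    -δ ≠ ∑ β ∈ Rpos, c β • β := by
  classical
  intro h
  apply no_pos_dependency hR hP
  set d : V → ℝ := fun x => c x + (if x = δ then 1 else 0) with hd
  have hdsum : ∑ x ∈ Rpos, d x • x = 0 := by
    rw [hd]
    simp only [add_smul, ite_smul, zero_smul, one_smul]
    rw [Finset.sum_add_distrib, Finset.sum_ite_eq' Rpos δ (fun x => x), if_pos hδ, ← h]
    abel
  have hdnonneg : ∀ x, 0 ≤ d x := by
    intro x
    rw [hd]
    dsimp only
    by_cases hx : x = δ
    · rw [if_pos hx]; linarith [hc x]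
    · rw [if_neg hx]; linarith [hc x]
  refine ⟨Rpos.filter (fun x => d x ≠ 0), Finset.filter_subset _ _, ⟨δ, ?_⟩, d, ?_, ?_⟩
  · rw [Finset.mem_filter]
    refine ⟨hδ, ?_⟩
    rw [hd]
    dsimp only
    rw [if_pos rfl]
    have := hc δ
    intro h0
    linarith
  · intro x hx
    exact lt_of_le_of_ne (hdnonneg x) (Ne.symm (Finset.mem_filter.1 hx).2)
  · rw [Finset.sum_filter_of_ne, hdsum]
    intro x _ hfx h0
    exact hfx (by rw [h0, zero_smul])

/-- Two distinct maximal roots in a suitable subset `S` of the positive roots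
are orthogonal. -/
lemma maxin_orth {S : Set V} (hSsub : ∀ x ∈ S, x ∈ Rpos)
    (hSadd : ∀ x ∈ S, ∀ y ∈ S, x + y ∈ Rpos → x + y ∈ S)
    {α α' : V} (hmax : IsMaxIn Rpos S α) (hmax' : IsMaxIn Rpos S α') (hne : α ≠ α') :
    ⟪α, α'⟫ = 0 := by
  have hαS := hmax.1
  have hα'S := hmax'.1
  have hαR : α ∈ Rpos := hSsub _ hαS
  have hα'R : α' ∈ Rpos := hSsub _ hα'S
  rcases lt_trichotomy (⟪α, α'⟫ : ℝ) 0 with hlt | h0 | hgt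
  · exfalso
    have hα'na : α' ≠ -α := fun h => hP.not_mem_and_neg_mem α hαR (h ▸ hα'R)
    have hsumR : α + α' ∈ Rpos := hP.add_mem _ hαR _ hα'R
      (root_add_mem hR (hP.subset hαR) (hP.subset hα'R) hα'na hlt)
    have hsumS : α + α' ∈ S := hSadd _ hαS _ hα'S hsumR
    have hrle : rle Rpos α (α + α') := by
      refine ⟨Set.indicator ({α'} : Set V) (fun _ => (1 : ℝ)), indicator_nonneg' α', ?_⟩
      rw [indicator_sum_single hα'R]
      abel
    obtain ⟨c, hc, hcs⟩ := hmax.2 _ hsumS hrle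
    exact neg_root_not_comb hR hP hα'R c hc (by rw [← hcs]; abel)
  · exact h0
  · exfalso
    have hnα' : -α' ∈ R := neg_root_mem hR (hP.subset hα'R)
    have h1 : (-α' : V) ≠ -α := fun h => hne (neg_injective h).symm
    have hin2 : ⟪α, -α'⟫ < 0 := by rw [inner_neg_right]; linarith
    have hdiff : α + -α' ∈ R := root_add_mem hR (hP.subset hαR) hnα' h1 hin2
    rcases hP.mem_or_neg_mem _ hdiff with hd | hd
    · have hrle : rle Rpos α' α := by
        refine ⟨Set.indicator ({α + -α'} : Set V) (fun _ => (1 : ℝ)),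
          indicator_nonneg' _, ?_⟩
        rw [indicator_sum_single hd]
        abel
      obtain ⟨c, hc, hcs⟩ := hmax'.2 _ hαS hrle
      exact neg_root_not_comb hR hP hd c hc (by rw [← hcs]; abel)
    · have hrle : rle Rpos α α' := by
        refine ⟨Set.indicator ({-(α + -α')} : Set V) (fun _ => (1 : ℝ)),
          indicator_nonneg' _, ?_⟩
        rw [indicator_sum_single hd]
        abel
      obtain ⟨c, hc, hcs⟩ := hmax.2 _ hα'S hrle
      exact neg_root_not_comb hR hP hd c hc (by rw [← hcs]; abel)

end RS2

lemma cascadeLevel_eq (Rpos : Finset V) (n : ℕ) : cascadeLevel Rpos n =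
    {α | IsMaxIn Rpos
      {β | β ∈ Rpos ∧ ∀ m, m < n → ∀ γ ∈ cascadeLevel Rpos m, ⟪γ, β⟫ = 0} α} := by
  rw [cascadeLevel]

theorem cascade_pairwise_orthogonal'
    {R Rpos : Finset V} (hR : IsRootSystem R) (hP : IsPositiveSystem R Rpos) :
    ∀ α ∈ cascade Rpos, ∀ α' ∈ cascade Rpos, α ≠ α' →
      2 * ⟪α', α⟫ / ⟪α', α'⟫ = 0 := by
  have key : ∀ nn mm (a b : V), a ∈ cascadeLevel Rpos nn → b ∈ cascadeLevel Rpos mm →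
      a ≠ b → ⟪a, b⟫ = 0 := by
    intro nn mm a b ha hb hab
    rcases lt_trichotomy nn mm with h | h | h
    · rw [cascadeLevel_eq] at hb
      exact hb.1.2 nn h a ha
    · subst h
      rw [cascadeLevel_eq] at ha hb
      refine maxin_orth hR hP ?_ ?_ ha hb hab
      · intro x hx
        exact hx.1
      · intro x hx y hy hxy
        refine ⟨hxy, fun m hm γ hγ => ?_⟩
        rw [inner_add_right, hx.2 m hm γ hγ, hy.2 m hm γ hγ, add_zero]
    · rw [cascadeLevel_eq] at ha
      have h2 : (⟪a, b⟫ : ℝ) = ⟪b, a⟫ := real_inner_comm b a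
      rw [h2]
      exact ha.1.2 mm h b hb
  intro a ha b hb hab
  obtain ⟨n1, hn1⟩ := Set.mem_iUnion.1 ha
  obtain ⟨n2, hn2⟩ := Set.mem_iUnion.1 hb
  rw [key n2 n1 b a hn2 hn1 (Ne.symm hab), mul_zero, zero_div]


/-- If `-1` lies in the Weyl group of the root system `R`, then any two distinct roots
`α, α'` of Kostant's cascade satisfy `⟨α'^∨, α⟩ = 0`. -/
theorem cascade_pairwise_orthogonal
    {R Rpos : Finset V} (hR : IsRootSystem R) (hP : IsPositiveSystem R Rpos)
    (hneg : (LinearIsometryEquiv.neg ℝ : V ≃ₗᵢ[ℝ] V) ∈ weylGroup R) :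
    ∀ α ∈ cascade Rpos, ∀ α' ∈ cascade Rpos, α ≠ α' →
      2 * ⟪α', α⟫ / ⟪α', α'⟫ = 0 := by
  exact cascade_pairwise_orthogonal' hR hP
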